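/- Let G be a graph on vertex set [n] such that whenever 1 ≤ i < j < k ≤ n and ij ∈ G, also ik ∈ G. For 1 < j ≤ n let d_j = #{i < j : ij ∉ G}. Then the number of cosets (a_1,...,a_n) + H in (Z/(n+1))^n / H (H generated by (1,...,1)) such that for all i < j, a_i = a_j implies ij ∈ G, equals the product over 1 < j ≤ n of (n - d_j + 1). -/
import Mathlib

open Finset

/-- snoc validity -/
lemma valid_snoc_iff {n : ℕ} {C : Type*} (G : SimpleGraph (Fin (n+1)))
    (b : Fin n → C) (c : C) :
    (∀ i j : Fin (n+1), i < j → (Fin.snoc b c : Fin (n+1) → C) i = (Fin.snoc b c : Fin (n+1) → C) j → G.Adj i j) ↔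
    ((∀ i j : Fin n, i < j → b i = b j → G.Adj i.castSucc j.castSucc) ∧
      ∀ i : Fin n, ¬ G.Adj i.castSucc (Fin.last n) → b i ≠ c) := by
  constructor
  · intro h
    refine ⟨fun i j hij hbij => ?_, fun i hadj hbc => ?_⟩
    · have := h i.castSucc j.castSucc (by simpa using hij) (by simpa [Fin.snoc_castSucc] using hbij)
      exact this
    · exact hadj (h i.castSucc (Fin.last n) (Fin.castSucc_lt_last i)
        (by simp [Fin.snoc_castSucc, Fin.snoc_last, hbc]))
  · rintro ⟨h1, h2⟩ i j hij heq
    rcases Fin.eq_castSucc_or_eq_last j with ⟨j', rfl⟩ | rfl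
    · have hi : i < Fin.last n := lt_trans hij (Fin.castSucc_lt_last j')
      rcases Fin.eq_castSucc_or_eq_last i with ⟨i', rfl⟩ | rfl
      · exact h1 i' j' (by simpa using hij) (by simpa [Fin.snoc_castSucc] using heq)
      · exact absurd hi (lt_irrefl _)
    · rcases Fin.eq_castSucc_or_eq_last i with ⟨i', rfl⟩ | rfl
      · by_contra hadj
        exact h2 i' hadj (by simpa [Fin.snoc_castSucc, Fin.snoc_last] using heq)
      · exact absurd hij (lt_irrefl _)

lemma count_valid {C : Type*} [Fintype C] [DecidableEq C] :
    ∀ (n : ℕ) (G : SimpleGraph (Fin n)) (_ : DecidableRel G.Adj),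
    (∀ i j l : Fin n, i < j → j < l → G.Adj i j → G.Adj i l) →
    Fintype.card {a : Fin n → C // ∀ i j : Fin n, i < j → a i = a j → G.Adj i j} =
      ∏ j : Fin n, (Fintype.card C - (univ.filter (fun i => i < j ∧ ¬ G.Adj i j)).card) := by
  intro n
  induction n with
  | zero =>
    intro G _ hG
    have h1 : Fintype.card {a : Fin 0 → C // ∀ i j : Fin 0, i < j → a i = a j → G.Adj i j} = 1 :=
      Fintype.card_eq_one_iff.mpr
        ⟨⟨fun i => i.elim0, fun i => i.elim0⟩, fun b => Subtype.ext (funext fun i => i.elim0)⟩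
    simp [h1]
  | succ n ih =>
    intro G instD hG
    classical
    set G' : SimpleGraph (Fin n) := SimpleGraph.comap Fin.castSucc G with hG'
    have instD' : DecidableRel G'.Adj := fun a b => instD _ _
    have hG'her : ∀ i j l : Fin n, i < j → j < l → G'.Adj i j → G'.Adj i l := by
      intro i j l h1 h2 hadj
      exact hG i.castSucc j.castSucc l.castSucc (by simpa using h1) (by simpa using h2) hadj
    -- forbidden set
    have key : ∀ b : Fin n → C, (∀ i j : Fin n, i < j → b i = b j → G'.Adj i j) →
        ((univ.filter (fun i : Fin n => ¬ G.Adj i.castSucc (Fin.last n))).image b).card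
          = (univ.filter (fun i : Fin n => ¬ G.Adj i.castSucc (Fin.last n))).card := by
      intro b hb
      apply Finset.card_image_of_injOn
      intro i hi j hj hbij
      by_contra hne
      rcases lt_or_gt_of_ne hne with h | h
      · have := hb i j h hbij
        simp only [mem_coe, mem_filter] at hi
        exact hi.2 (hG i.castSucc j.castSucc (Fin.last n) (by simpa using h)
          (Fin.castSucc_lt_last j) this)
      · have := hb j i h hbij.symm
        simp only [mem_coe, mem_filter] at hj
        exact hj.2 (hG j.castSucc i.castSucc (Fin.last n) (by simpa using h)
          (Fin.castSucc_lt_last i) this)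
    -- equiv to sigma
    let e : {a : Fin (n+1) → C // ∀ i j : Fin (n+1), i < j → a i = a j → G.Adj i j} ≃
        (Σ b : {b : Fin n → C // ∀ i j : Fin n, i < j → b i = b j → G'.Adj i j},
          {c : C // c ∉ (univ.filter (fun i : Fin n => ¬ G.Adj i.castSucc (Fin.last n))).image b.1}) :=
      { toFun := fun a =>
          ⟨⟨Fin.init a.1, by
            have := (valid_snoc_iff G (Fin.init a.1) (a.1 (Fin.last n))).mp
              (by rw [Fin.snoc_init_self]; exact a.2)
            exact this.1⟩,
          ⟨a.1 (Fin.last n), by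
            have := (valid_snoc_iff G (Fin.init a.1) (a.1 (Fin.last n))).mp
              (by rw [Fin.snoc_init_self]; exact a.2)
            simp only [Finset.mem_image, mem_filter, mem_univ, true_and, not_exists]
            rintro i hi
            exact this.2 i hi.1 hi.2⟩⟩
        invFun := fun p =>
          ⟨Fin.snoc p.1.1 p.2.1, by
            refine (valid_snoc_iff G p.1.1 p.2.1).mpr ⟨p.1.2, fun i hadj hbc => ?_⟩
            exact p.2.2 (Finset.mem_image.mpr ⟨i, Finset.mem_filter.mpr ⟨mem_univ i, hadj⟩, hbc⟩)⟩
        left_inv := fun a => Subtype.ext (Fin.snoc_init_self a.1)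
        right_inv := fun p => by
          refine Sigma.ext (Subtype.ext ?_) ?_
          · show Fin.init (Fin.snoc p.1.1 p.2.1 : Fin (n+1) → C) = p.1.1
            exact Fin.init_snoc _ _
          · rw [Subtype.heq_iff_coe_eq]
            · show (Fin.snoc p.1.1 p.2.1 : Fin (n+1) → C) (Fin.last n) = p.2.1
              exact Fin.snoc_last _ _
            · intro c
              show c ∉ Finset.image (Fin.init (Fin.snoc p.1.1 p.2.1 : Fin (n+1) → C)) _ ↔ _
              rw [Fin.init_snoc] }
    rw [Fintype.card_congr e, Fintype.card_sigma]
    have hcardfib : ∀ b : {b : Fin n → C // ∀ i j : Fin n, i < j → b i = b j → G'.Adj i j},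
        Fintype.card {c : C // c ∉ (univ.filter (fun i : Fin n => ¬ G.Adj i.castSucc (Fin.last n))).image b.1}
        = Fintype.card C - (univ.filter (fun i : Fin n => ¬ G.Adj i.castSucc (Fin.last n))).card := by
      intro b
      rw [Fintype.card_subtype_compl]
      congr 1
      exact (Fintype.card_coe _).trans (key b.1 b.2)
    simp_rw [hcardfib]
    rw [Finset.sum_const, smul_eq_mul, Finset.card_univ, Fin.prod_univ_castSucc]
    have hd_last : (univ.filter (fun i : Fin (n+1) => i < Fin.last n ∧ ¬ G.Adj i (Fin.last n))).card
        = (univ.filter (fun i : Fin n => ¬ G.Adj i.castSucc (Fin.last n))).card := by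
      rw [Finset.card_filter, Finset.card_filter, Fin.sum_univ_castSucc]
      simp [Fin.castSucc_lt_last]
    have hd_cast : ∀ j : Fin n,
        (univ.filter (fun i : Fin (n+1) => i < j.castSucc ∧ ¬ G.Adj i j.castSucc)).card
        = (univ.filter (fun i : Fin n => i < j ∧ ¬ G'.Adj i j)).card := by
      intro j
      rw [Finset.card_filter, Finset.card_filter, Fin.sum_univ_castSucc]
      have h1 : ¬ (Fin.last n < j.castSucc) := by
        simp [Fin.lt_iff_val_lt_val]
      simp only [h1, false_and, if_false, add_zero]
      refine Finset.sum_congr rfl (fun i _ => ?_)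
      simp [hG', Fin.castSucc_lt_castSucc_iff]
    rw [hd_last, ih G' instD' hG'her]
    have hp : ∀ j : Fin n, j ∈ (univ : Finset (Fin n)) →
        Fintype.card C - (univ.filter (fun i : Fin n => i < j ∧ ¬ G'.Adj i j)).card
        = Fintype.card C - (univ.filter (fun i : Fin (n+1) => i < j.castSucc ∧ ¬ G.Adj i j.castSucc)).card :=
      fun j _ => by rw [hd_cast j]
    rw [Finset.prod_congr rfl hp]

theorem card_cosets_graph (n : ℕ) (hn : 1 ≤ n) (G : SimpleGraph (Fin n))
    [DecidableRel G.Adj]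
    (hG : ∀ i j l : Fin n, i < j → j < l → G.Adj i j → G.Adj i l) :
    Nat.card {c : (Fin n → ZMod (n + 1)) ⧸
        AddSubgroup.zmultiples (fun _ => 1 : Fin n → ZMod (n + 1)) //
      ∀ a : Fin n → ZMod (n + 1), QuotientAddGroup.mk a = c →
        ∀ i j : Fin n, i < j → a i = a j → G.Adj i j} =
    ∏ j ∈ Finset.univ.filter (fun j : Fin n => 1 ≤ j.val),
      (n - (Finset.univ.filter (fun i : Fin n => i < j ∧ ¬ G.Adj i j)).card + 1) := by
  classical
  set H := AddSubgroup.zmultiples (fun _ => 1 : Fin n → ZMod (n + 1)) with hH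
  set z : Fin n := ⟨0, hn⟩ with hz
  -- membership of constants in H
  have hconst : ∀ c : ZMod (n+1), (fun _ => c : Fin n → ZMod (n+1)) ∈ H := by
    intro c
    rw [hH, AddSubgroup.mem_zmultiples_iff]
    refine ⟨(ZMod.cast c : ℤ), funext fun i => ?_⟩
    simp only [Pi.smul_apply, zsmul_eq_mul, mul_one]
    exact ZMod.intCast_zmod_cast c
  have hmemH : ∀ v : Fin n → ZMod (n+1), v ∈ H → ∃ c : ZMod (n+1), v = fun _ => c := by
    intro v hv
    rw [hH, AddSubgroup.mem_zmultiples_iff] at hv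
    obtain ⟨k, hk⟩ := hv
    exact ⟨(k : ZMod (n+1)), by rw [← hk]; funext i; simp [zsmul_eq_mul]⟩
  -- the bijection
  set Valid : (Fin n → ZMod (n+1)) → Prop :=
    fun a => ∀ i j : Fin n, i < j → a i = a j → G.Adj i j with hValid
  have hbij : Nat.card {a : Fin n → ZMod (n+1) // Valid a} =
      Nat.card {c : (Fin n → ZMod (n+1)) ⧸ H //
        ∀ a : Fin n → ZMod (n+1), QuotientAddGroup.mk a = c → Valid a} * (n + 1) := by
    have := Nat.card_eq_of_bijective
      (f := fun a : {a : Fin n → ZMod (n+1) // Valid a} =>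
        ((⟨QuotientAddGroup.mk a.1, by
          intro a' ha' i j hij heq
          rw [QuotientAddGroup.eq] at ha'
          obtain ⟨c, hc⟩ := hmemH _ ha'
          have hpt : ∀ i, a.1 i = a' i + c := fun i => by
            have := congrFun hc i
            simp only [Pi.add_apply, Pi.neg_apply] at this
            linear_combination this
          exact a.2 i j hij (by rw [hpt i, hpt j, heq])⟩ :
          {c : (Fin n → ZMod (n+1)) ⧸ H //
            ∀ a : Fin n → ZMod (n+1), QuotientAddGroup.mk a = c → Valid a}),
          a.1 z))
      (by
        constructor
        · rintro ⟨a, ha⟩ ⟨b, hb⟩ hab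
          simp only [Prod.mk.injEq, Subtype.mk.injEq] at hab
          obtain ⟨h1, h2⟩ := hab
          rw [QuotientAddGroup.eq] at h1
          obtain ⟨c, hc⟩ := hmemH _ h1
          have hpt : ∀ i, b i = a i + c := fun i => by
            have := congrFun hc i
            simp only [Pi.add_apply, Pi.neg_apply] at this
            linear_combination this
          have hc0 : c = 0 := by
            have := hpt z
            rw [← h2] at this
            linear_combination -this
          refine Subtype.ext (funext fun i => ?_)
          show a i = b i
          rw [hpt i, hc0, add_zero]
        · rintro ⟨⟨c, hc⟩, t⟩
          obtain ⟨a, ha⟩ := Quotient.exists_rep c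
          set b : Fin n → ZMod (n+1) := fun i => a i + (t - a z) with hb
          have hmk : QuotientAddGroup.mk b = c := by
            rw [← ha]
            refine (QuotientAddGroup.eq).mpr ?_
            have : -b + a = (fun _ => (a z - t) : Fin n → ZMod (n+1)) := by
              funext i
              simp only [hb, Pi.add_apply, Pi.neg_apply]
              ring
            rw [this]
            exact hconst _
          refine ⟨⟨b, hc b hmk⟩, ?_⟩
          simp only [Prod.mk.injEq, Subtype.mk.injEq]
          exact ⟨hmk, by simp [hb]⟩)
    rw [this, Nat.card_prod, Nat.card_zmod]
  -- counting
  have hcount := count_valid (C := ZMod (n+1)) n G ‹DecidableRel G.Adj› hG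
  rw [Nat.card_eq_fintype_card] at hbij
  rw [hcount] at hbij
  -- split product
  have hdle : ∀ j : Fin n, (Finset.univ.filter (fun i : Fin n => i < j ∧ ¬ G.Adj i j)).card ≤ n := by
    intro j
    calc (Finset.univ.filter (fun i : Fin n => i < j ∧ ¬ G.Adj i j)).card
        ≤ (Finset.univ : Finset (Fin n)).card := Finset.card_filter_le _ _
      _ = n := by simp
  clear hcount hmemH hconst
  have hsplit : ∏ j : Fin n, (Fintype.card (ZMod (n+1)) -
        (Finset.univ.filter (fun i : Fin n => i < j ∧ ¬ G.Adj i j)).card)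
      = (∏ j ∈ Finset.univ.filter (fun j : Fin n => 1 ≤ j.val),
          (n - (Finset.univ.filter (fun i : Fin n => i < j ∧ ¬ G.Adj i j)).card + 1)) * (n + 1) := by
    rw [← Finset.prod_filter_mul_prod_filter_not Finset.univ (fun j : Fin n => 1 ≤ j.val)]
    congr 1
    · refine Finset.prod_congr rfl (fun j _ => ?_)
      have := hdle j
      rw [ZMod.card (n+1)]
      omega
    · have hone : Finset.univ.filter (fun j : Fin n => ¬ 1 ≤ j.val) = {z} := by
        ext j
        simp only [Finset.mem_filter, Finset.mem_univ, true_and, Finset.mem_singleton]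
        constructor
        · intro h
          apply Fin.ext
          show j.val = 0
          omega
        · rintro rfl; simp [hz, Fin.le_def]
      rw [hone, Finset.prod_singleton]
      have hzero : Finset.univ.filter (fun i : Fin n => i < z ∧ ¬ G.Adj i z) = ∅ := by
        apply Finset.filter_false_of_mem
        intro i _
        rintro ⟨h1, -⟩
        exact absurd h1 (by simp [hz, Fin.lt_iff_val_lt_val])
      rw [hzero, ZMod.card (n+1)]
      simp
  rw [hsplit] at hbij
  exact (Nat.eq_of_mul_eq_mul_right (by omega) hbij.symm)
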